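/- Chord inequality and its strict version for non-straight curves: for every continuous γ : ℝ → ℝ, the reconstructed curve Γ satisfies |Γ(s) − Γ(s')| ≤ |s − s'| for all s, s' ∈ ℝ; moreover, if γ(s₀) ≠ 0 for some s₀ ∈ ℝ, then there exists a nonempty open set U ⊆ ℝ² such that |Γ(s) − Γ(s')| < |s − s'| holds for every (s,s') ∈ U. -/

import Mathlib

open MeasureTheory intervalIntegral

/-- `β(s₂,s₁) = ∫_{s₁}^{s₂} γ(ξ) dξ`. -/
noncomputable def curvInt (γ : ℝ → ℝ) (s₂ s₁ : ℝ) : ℝ := ∫ ξ in s₁..s₂, γ ξ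

/-- First component of the curve reconstructed from the signed curvature `γ`. -/
noncomputable def curveX (γ : ℝ → ℝ) (s : ℝ) : ℝ :=
  ∫ ξ in (0:ℝ)..s, Real.cos (curvInt γ ξ 0)

/-- Second component of the curve reconstructed from the signed curvature `γ`. -/
noncomputable def curveY (γ : ℝ → ℝ) (s : ℝ) : ℝ :=
  -∫ ξ in (0:ℝ)..s, Real.sin (curvInt γ ξ 0)

lemma continuous_curvInt {γ : ℝ → ℝ} (hγ : Continuous γ) :
    Continuous (fun ξ => curvInt γ ξ 0) :=
  intervalIntegral.continuous_primitive (fun a b => hγ.intervalIntegrable a b) 0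

lemma continuous_curveX {γ : ℝ → ℝ} (hγ : Continuous γ) : Continuous (curveX γ) :=
  intervalIntegral.continuous_primitive
    (fun a b => (Real.continuous_cos.comp (continuous_curvInt hγ)).intervalIntegrable a b) 0

lemma continuous_curveY {γ : ℝ → ℝ} (hγ : Continuous γ) : Continuous (curveY γ) :=
  (intervalIntegral.continuous_primitive
    (fun a b => (Real.continuous_sin.comp (continuous_curvInt hγ)).intervalIntegrable a b) 0).neg

/-- A continuous nonnegative function positive at a point of `[a,b]` has positive integral. -/
lemma pos_integral_of_pos_at {g : ℝ → ℝ} (hg : Continuous g) {a b x₀ : ℝ} (hab : a < b)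
    (hnn : ∀ x, 0 ≤ g x) (hx₀ : x₀ ∈ Set.Icc a b) (hpos : 0 < g x₀) :
    0 < ∫ x in a..b, g x := by
  obtain ⟨ε, hε, hball⟩ := Metric.continuousAt_iff.1 hg.continuousAt (g x₀ / 2) (by linarith)
  set c := max a (x₀ - ε / 2) with hc
  set d := min b (x₀ + ε / 2) with hd
  have hac : a ≤ c := le_max_left _ _
  have hdb : d ≤ b := min_le_left _ _
  have hcd : c < d := by
    apply max_lt <;> apply lt_min
    · exact hab
    · linarith [hx₀.1]
    · linarith [hx₀.2]
    · linarith
  have hlow : ∀ x ∈ Set.Icc c d, g x₀ / 2 ≤ g x := by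
    intro x hx
    have h1 : x₀ - ε / 2 ≤ x := le_trans (le_max_right _ _) hx.1
    have h2 : x ≤ x₀ + ε / 2 := le_trans hx.2 (min_le_right _ _)
    have : dist x x₀ < ε := by
      rw [Real.dist_eq, abs_lt]; constructor <;> linarith
    have := hball this
    rw [Real.dist_eq, abs_lt] at this
    linarith [this.1]
  have hint : ∀ u v : ℝ, IntervalIntegrable g volume u v := fun u v => hg.intervalIntegrable u v
  have hsplit : (∫ x in a..b, g x)
      = (∫ x in a..c, g x) + (∫ x in c..d, g x) + (∫ x in d..b, g x) := by
    rw [integral_add_adjacent_intervals (hint a c) (hint c d),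
      integral_add_adjacent_intervals (hint a d) (hint d b)]
  have h1 : 0 ≤ ∫ x in a..c, g x :=
    intervalIntegral.integral_nonneg hac (fun x _ => hnn x)
  have h3 : 0 ≤ ∫ x in d..b, g x :=
    intervalIntegral.integral_nonneg hdb (fun x _ => hnn x)
  have h2 : g x₀ / 2 * (d - c) ≤ ∫ x in c..d, g x := by
    have := intervalIntegral.integral_mono_on (f := fun _ => g x₀ / 2) (g := g) hcd.le
      intervalIntegrable_const (hint c d) hlow
    rwa [intervalIntegral.integral_const, smul_eq_mul, mul_comm] at this
  have : 0 < g x₀ / 2 * (d - c) := by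
    apply mul_pos (by linarith) (by linarith)
  linarith

set_option maxHeartbeats 1000000 in
/-- Chord length is at most arc length, for `a ≤ b`. -/
lemma chord_le {γ : ℝ → ℝ} (hγ : Continuous γ) {a b : ℝ} (hab : a ≤ b) :
    Real.sqrt ((curveX γ b - curveX γ a) ^ 2 + (curveY γ b - curveY γ a) ^ 2) ≤ b - a := by
  set F : ℝ → ℝ := fun ξ => Real.cos (curvInt γ ξ 0) with hF
  set G : ℝ → ℝ := fun ξ => Real.sin (curvInt γ ξ 0) with hG
  have hFc : Continuous F := Real.continuous_cos.comp (continuous_curvInt hγ)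
  have hGc : Continuous G := Real.continuous_sin.comp (continuous_curvInt hγ)
  set p := ∫ x in a..b, F x with hp
  set q := ∫ x in a..b, G x with hq
  have hX : curveX γ b - curveX γ a = p :=
    integral_interval_sub_left (hFc.intervalIntegrable 0 b) (hFc.intervalIntegrable 0 a)
  have hY : curveY γ b - curveY γ a = -q := by
    have : (∫ ξ in (0:ℝ)..b, G ξ) - ∫ ξ in (0:ℝ)..a, G ξ = q :=
      integral_interval_sub_left (hGc.intervalIntegrable 0 b) (hGc.intervalIntegrable 0 a)
    simp only [curveY]
    linarith [this]
  rw [hX, hY]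
  set r := Real.sqrt (p ^ 2 + (-q) ^ 2) with hr
  have hr0 : 0 ≤ r := Real.sqrt_nonneg _
  have hr2 : r ^ 2 = p ^ 2 + q ^ 2 := by
    rw [hr, Real.sq_sqrt (by positivity)]; ring
  have hpt : ∀ x, p * F x + q * G x ≤ r := by
    intro x
    have h1 : F x ^ 2 + G x ^ 2 = 1 := Real.cos_sq_add_sin_sq _
    nlinarith [sq_nonneg (p * G x - q * F x), sq_nonneg (p * F x + q * G x - r)]
  have hintf : ∫ x in a..b, (p * F x + q * G x) = r ^ 2 := by
    rw [intervalIntegral.integral_add ((hFc.intervalIntegrable a b).const_mul p)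
      ((hGc.intervalIntegrable a b).const_mul q),
      intervalIntegral.integral_const_mul, intervalIntegral.integral_const_mul, hr2]
    rw [← hp, ← hq]; ring
  have hmono : ∫ x in a..b, (p * F x + q * G x) ≤ ∫ x in a..b, (r : ℝ) := by
    apply intervalIntegral.integral_mono_on hab
      (((hFc.intervalIntegrable a b).const_mul p).add ((hGc.intervalIntegrable a b).const_mul q))
      intervalIntegrable_const (fun x _ => hpt x)
  rw [hintf, intervalIntegral.integral_const, smul_eq_mul] at hmono
  rcases eq_or_lt_of_le hr0 with h | h
  · rw [← h]; linarith
  · have h' : r * r ≤ (b - a) * r := by rw [pow_two] at hmono; linarith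
    exact le_of_mul_le_mul_right h' h

set_option maxHeartbeats 1000000 in
/-- Strict chord inequality when the total turning over `[a,b]` has cosine `< 1`. -/
lemma chord_lt {γ : ℝ → ℝ} (hγ : Continuous γ) {a b : ℝ} (hab : a < b)
    (hcos : Real.cos (∫ x in a..b, γ x) < 1) :
    Real.sqrt ((curveX γ b - curveX γ a) ^ 2 + (curveY γ b - curveY γ a) ^ 2) < b - a := by
  set F : ℝ → ℝ := fun ξ => Real.cos (curvInt γ ξ 0) with hF
  set G : ℝ → ℝ := fun ξ => Real.sin (curvInt γ ξ 0) with hG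
  have hFc : Continuous F := Real.continuous_cos.comp (continuous_curvInt hγ)
  have hGc : Continuous G := Real.continuous_sin.comp (continuous_curvInt hγ)
  set p := ∫ x in a..b, F x with hp
  set q := ∫ x in a..b, G x with hq
  have hX : curveX γ b - curveX γ a = p :=
    integral_interval_sub_left (hFc.intervalIntegrable 0 b) (hFc.intervalIntegrable 0 a)
  have hY : curveY γ b - curveY γ a = -q := by
    have : (∫ ξ in (0:ℝ)..b, G ξ) - ∫ ξ in (0:ℝ)..a, G ξ = q :=
      integral_interval_sub_left (hGc.intervalIntegrable 0 b) (hGc.intervalIntegrable 0 a)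
    simp only [curveY]
    linarith [this]
  have hle := chord_le hγ hab.le
  rcases lt_or_eq_of_le hle with h | heq
  · exact h
  exfalso
  -- equality case: r = b - a > 0
  rw [hX, hY] at heq
  set r := Real.sqrt (p ^ 2 + (-q) ^ 2) with hr
  have hrpos : 0 < r := by rw [heq]; linarith
  have hr2 : r ^ 2 = p ^ 2 + q ^ 2 := by
    rw [hr, Real.sq_sqrt (by positivity)]; ring
  have hpt : ∀ x, p * F x + q * G x ≤ r := by
    intro x
    have h1 : F x ^ 2 + G x ^ 2 = 1 := Real.cos_sq_add_sin_sq _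
    nlinarith [sq_nonneg (p * G x - q * F x), sq_nonneg (p * F x + q * G x - r)]
  set g : ℝ → ℝ := fun x => r - (p * F x + q * G x) with hgdef
  have hgc : Continuous g := continuous_const.sub
    ((continuous_const.mul hFc).add (continuous_const.mul hGc))
  have hgnn : ∀ x, 0 ≤ g x := fun x => by simp only [hgdef]; linarith [hpt x]
  have hintf : ∫ x in a..b, (p * F x + q * G x) = r ^ 2 := by
    rw [intervalIntegral.integral_add ((hFc.intervalIntegrable a b).const_mul p)
      ((hGc.intervalIntegrable a b).const_mul q),
      intervalIntegral.integral_const_mul, intervalIntegral.integral_const_mul, hr2]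
    rw [← hp, ← hq]; ring
  have hgint : ∫ x in a..b, g x = 0 := by
    rw [hgdef]
    rw [intervalIntegral.integral_sub intervalIntegrable_const
      (((hFc.intervalIntegrable a b).const_mul p).add ((hGc.intervalIntegrable a b).const_mul q)),
      hintf, intervalIntegral.integral_const, smul_eq_mul, heq]
    nlinarith
  -- hence g vanishes at a and b
  have hga : g a = 0 := by
    by_contra h
    have : 0 < g a := lt_of_le_of_ne (hgnn a) (Ne.symm h)
    have := pos_integral_of_pos_at hgc hab hgnn (Set.left_mem_Icc.2 hab.le) this
    linarith [hgint]
  have hgb : g b = 0 := by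
    by_contra h
    have : 0 < g b := lt_of_le_of_ne (hgnn b) (Ne.symm h)
    have := pos_integral_of_pos_at hgc hab hgnn (Set.right_mem_Icc.2 hab.le) this
    linarith [hgint]
  -- so (F a, G a) = (F b, G b) = (p, q)/r
  have hFGa : F a ^ 2 + G a ^ 2 = 1 := Real.cos_sq_add_sin_sq _
  have hFGb : F b ^ 2 + G b ^ 2 = 1 := Real.cos_sq_add_sin_sq _
  have hfa : p * F a + q * G a = r := by simp only [hgdef] at hga; linarith
  have hfb : p * F b + q * G b = r := by simp only [hgdef] at hgb; linarith
  have hza : p * G a - q * F a = 0 := by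
    have hid : (p * G a - q * F a) ^ 2
        = (p ^ 2 + q ^ 2) * (F a ^ 2 + G a ^ 2) - (p * F a + q * G a) ^ 2 := by ring
    have h0 : (p * G a - q * F a) ^ 2 = 0 := by rw [hid, hFGa, hfa, ← hr2]; ring
    exact sq_eq_zero_iff.mp h0
  have hzb : p * G b - q * F b = 0 := by
    have hid : (p * G b - q * F b) ^ 2
        = (p ^ 2 + q ^ 2) * (F b ^ 2 + G b ^ 2) - (p * F b + q * G b) ^ 2 := by ring
    have h0 : (p * G b - q * F b) ^ 2 = 0 := by rw [hid, hFGb, hfb, ← hr2]; ring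
    exact sq_eq_zero_iff.mp h0
  have hpa : p = r * F a ∧ q = r * G a := by
    constructor
    · linear_combination F a * hfa + G a * hza - p * hFGa
    · linear_combination G a * hfa - F a * hza - q * hFGa
  have hpb : p = r * F b ∧ q = r * G b := by
    constructor
    · linear_combination F b * hfb + G b * hzb - p * hFGb
    · linear_combination G b * hfb - F b * hzb - q * hFGb
  -- so cos (β b − β a) = 1
  have hβ : curvInt γ b 0 - curvInt γ a 0 = ∫ x in a..b, γ x := by
    have := integral_add_adjacent_intervals (μ := volume) (f := γ)
      (hγ.intervalIntegrable 0 a) (hγ.intervalIntegrable a b)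
    simp only [curvInt]
    linarith
  have hcos1 : Real.cos (∫ x in a..b, γ x) = 1 := by
    rw [← hβ, Real.cos_sub]
    have : Real.cos (curvInt γ b 0) * Real.cos (curvInt γ a 0)
        + Real.sin (curvInt γ b 0) * Real.sin (curvInt γ a 0) = F b * F a + G b * G a := rfl
    rw [this]
    have key : r * r * (F b * F a + G b * G a) = r * r * 1 := by
      calc r * r * (F b * F a + G b * G a)
          = (r * F b) * (r * F a) + (r * G b) * (r * G a) := by ring
        _ = p * p + q * q := by rw [← hpa.1, ← hpa.2, ← hpb.1, ← hpb.2]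
        _ = r * r * 1 := by linear_combination -hr2
    have := mul_left_cancel₀ (by positivity : (r * r : ℝ) ≠ 0) key
    linarith
  linarith

/-- the chord inequality `|Γ(s) − Γ(s')| ≤ |s − s'|`, and, if the curvature is
not identically zero, strictness of the inequality on some nonempty open set of pairs. -/
theorem chord_le_arc_and_strict (γ : ℝ → ℝ) (hγ : Continuous γ) :
    (∀ s s' : ℝ,
      Real.sqrt ((curveX γ s - curveX γ s') ^ 2 + (curveY γ s - curveY γ s') ^ 2) ≤ |s - s'|) ∧
    ((∃ s₀ : ℝ, γ s₀ ≠ 0) → ∃ U : Set (ℝ × ℝ), IsOpen U ∧ U.Nonempty ∧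
      ∀ p ∈ U, Real.sqrt ((curveX γ p.1 - curveX γ p.2) ^ 2
        + (curveY γ p.1 - curveY γ p.2) ^ 2) < |p.1 - p.2|) := by
  constructor
  · intro s s'
    rcases le_total s' s with h | h
    · rw [abs_of_nonneg (by linarith)]
      exact chord_le hγ h
    · rw [abs_sub_comm, abs_of_nonneg (by linarith)]
      have := chord_le hγ h
      have e1 : (curveX γ s - curveX γ s') ^ 2 = (curveX γ s' - curveX γ s) ^ 2 := by ring
      have e2 : (curveY γ s - curveY γ s') ^ 2 = (curveY γ s' - curveY γ s) ^ 2 := by ring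
      rw [e1, e2]
      exact this
  · rintro ⟨s₀, hs₀⟩
    -- find a short interval where γ keeps its sign
    have habs : 0 < |γ s₀| := abs_pos.2 hs₀
    obtain ⟨δ₀, hδ₀, hball⟩ := Metric.continuousAt_iff.1 hγ.continuousAt (|γ s₀| / 2)
      (by linarith)
    set δ := min (δ₀ / 2) (Real.pi / |γ s₀|) with hδdef
    have hπ := Real.pi_pos
    have hδpos : 0 < δ := lt_min (by linarith) (by positivity)
    set a := s₀ with ha
    set b := s₀ + δ with hb
    have hab : a < b := by simp only [ha, hb]; linarith
    have hclose : ∀ x ∈ Set.uIcc a b, |γ x - γ s₀| < |γ s₀| / 2 := by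
      intro x hx
      rw [Set.uIcc_of_le hab.le] at hx
      have h1 : δ ≤ δ₀ / 2 := min_le_left _ _
      have : dist x s₀ < δ₀ := by
        rw [Real.dist_eq, abs_lt]
        constructor
        · simp only [ha] at hx; linarith [hx.1]
        · simp only [hb] at hx; linarith [hx.2]
      have := hball this
      rwa [Real.dist_eq] at this
    -- total turning Δ = ∫_a^b γ satisfies 0 < |Δ| < 2π
    set Δ := ∫ x in a..b, γ x with hΔ
    have hΔbound : |Δ| ≤ 3 / 2 * |γ s₀| * δ := by
      have : ‖∫ x in a..b, γ x‖ ≤ 3 / 2 * |γ s₀| * |b - a| := by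
        apply intervalIntegral.norm_integral_le_of_norm_le_const
        intro x hx
        rw [Set.uIoc_of_le hab.le] at hx
        have hx' : x ∈ Set.uIcc a b := by
          rw [Set.uIcc_of_le hab.le]; exact Set.Ioc_subset_Icc_self hx
        have := hclose x hx'
        rw [Real.norm_eq_abs]
        have h1 := abs_sub_abs_le_abs_sub (γ x) (γ s₀)
        linarith
      rwa [Real.norm_eq_abs, show |b - a| = δ by rw [abs_of_nonneg (by linarith)]; linarith] at this
    have hΔlt : |Δ| < 2 * Real.pi := by
      have h2 : δ ≤ Real.pi / |γ s₀| := min_le_right _ _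
      have : 3 / 2 * |γ s₀| * δ ≤ 3 / 2 * Real.pi := by
        have := mul_le_mul_of_nonneg_left h2 (by positivity : (0:ℝ) ≤ 3 / 2 * |γ s₀|)
        calc 3 / 2 * |γ s₀| * δ ≤ 3 / 2 * |γ s₀| * (Real.pi / |γ s₀|) := this
          _ = 3 / 2 * Real.pi := by
              field_simp
      linarith [hΔbound]
    have hΔne : Δ ≠ 0 := by
      rcases lt_or_gt_of_ne hs₀ with hneg | hpos
      · -- γ s₀ < 0 : γ < γ s₀ / 2 < 0 on the interval
        have : Δ ≤ (γ s₀ / 2) * δ := by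
          have hm : ∀ x ∈ Set.Icc a b, γ x ≤ γ s₀ / 2 := by
            intro x hx
            have := hclose x (by rw [Set.uIcc_of_le hab.le]; exact hx)
            rw [abs_of_neg hneg] at this
            rw [abs_lt] at this
            linarith [this.2]
          have := intervalIntegral.integral_mono_on (μ := volume) hab.le
            (hγ.intervalIntegrable a b) intervalIntegrable_const hm
          rw [intervalIntegral.integral_const, smul_eq_mul] at this
          calc Δ ≤ (b - a) * (γ s₀ / 2) := this
            _ = (γ s₀ / 2) * δ := by rw [hb]; ring
        have : Δ < 0 := lt_of_le_of_lt this (by nlinarith)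
        linarith
      · have : (γ s₀ / 2) * δ ≤ Δ := by
          have hm : ∀ x ∈ Set.Icc a b, γ s₀ / 2 ≤ γ x := by
            intro x hx
            have := hclose x (by rw [Set.uIcc_of_le hab.le]; exact hx)
            rw [abs_of_pos hpos] at this
            rw [abs_lt] at this
            linarith [this.1]
          have := intervalIntegral.integral_mono_on (μ := volume) hab.le
            intervalIntegrable_const (hγ.intervalIntegrable a b) hm
          rw [intervalIntegral.integral_const, smul_eq_mul] at this
          calc (γ s₀ / 2) * δ = (b - a) * (γ s₀ / 2) := by rw [hb]; ring
            _ ≤ Δ := this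
        have : 0 < Δ := lt_of_lt_of_le (by nlinarith) this
        linarith
    have hcos : Real.cos Δ < 1 := by
      rcases lt_or_eq_of_le (Real.cos_le_one Δ) with h | h
      · exact h
      · exfalso
        rw [abs_lt] at hΔlt
        have := (Real.cos_eq_one_iff_of_lt_of_lt (by linarith [hΔlt.1]) hΔlt.2).1 h
        exact hΔne this
    have hstrict := chord_lt hγ hab hcos
    -- the open set
    set U : Set (ℝ × ℝ) := {p | Real.sqrt ((curveX γ p.1 - curveX γ p.2) ^ 2
        + (curveY γ p.1 - curveY γ p.2) ^ 2) < |p.1 - p.2|} with hU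
    refine ⟨U, ?_, ⟨(b, a), ?_⟩, fun p hp => hp⟩
    · apply isOpen_lt
      · apply Continuous.sqrt
        apply Continuous.add
        · exact (((continuous_curveX hγ).comp continuous_fst).sub
            ((continuous_curveX hγ).comp continuous_snd)).pow 2
        · exact (((continuous_curveY hγ).comp continuous_fst).sub
            ((continuous_curveY hγ).comp continuous_snd)).pow 2
      · exact (continuous_fst.sub continuous_snd).abs
    · show Real.sqrt _ < |b - a|
      rwa [abs_of_pos (by linarith)]
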